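/- arXiv:1901.00343 — 4 statements merged into one kernel-verified Lean document; each statement's English description precedes it below -/
import Mathlib

section
/- Conservation of total mass (matrix form). Let M and A be n×n real symmetric matrices, viewed as complex matrices with real entries, with M invertible, let k and ε be real numbers with ε ≠ 0, and let c_n ∈ ℂⁿ. If c_{n+1} = exp((k/(iε)) M⁻¹ A) c_n, then c_{n+1}ᴴ M c_{n+1} = c_nᴴ M c_n. -/
open Matrix

/-- **Conservation of total mass (matrix form).** Let `M` and `A` be `n × n` real
symmetric matrices, viewed as complex matrices with real entries, with `M` invertible, let
`k, ε` be real with `ε ≠ 0`, and let `cₙ ∈ ℂⁿ`. If `cₙ₊₁ = exp ((k/(iε)) M⁻¹ A) cₙ`, then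
`cₙ₊₁ᴴ M cₙ₊₁ = cₙᴴ M cₙ`. -/
theorem mass_conservation_matrix {n : ℕ} (M A : Matrix (Fin n) (Fin n) ℝ)
    (hMsymm : M.IsSymm) (hAsymm : A.IsSymm) (hM : IsUnit M) (k ε : ℝ) (hε : ε ≠ 0)
    (c c' : Fin n → ℂ)
    (hstep : c' = (NormedSpace.exp (((k : ℂ) / (Complex.I * (ε : ℂ))) •
        ((M.map (Complex.ofReal))⁻¹ * A.map (Complex.ofReal)))) *ᵥ c) :
    star c' ⬝ᵥ (M.map (Complex.ofReal)) *ᵥ c' = star c ⬝ᵥ (M.map (Complex.ofReal)) *ᵥ c := by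
  set Mc : Matrix (Fin n) (Fin n) ℂ := M.map Complex.ofReal with hMcdef
  set Ac : Matrix (Fin n) (Fin n) ℂ := A.map Complex.ofReal with hAcdef
  set z : ℂ := (k : ℂ) / (Complex.I * (ε : ℂ)) with hzdef
  set X : Matrix (Fin n) (Fin n) ℂ := Mc⁻¹ * Ac with hXdef
  set B : Matrix (Fin n) (Fin n) ℂ := NormedSpace.exp (z • X) with hBdef
  -- Mc is a unit
  have hMc : IsUnit Mc := by
    rw [Matrix.isUnit_iff_isUnit_det] at hM ⊢
    have : Mc.det = Complex.ofRealHom M.det := (RingHom.map_det Complex.ofRealHom M).symm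
    rw [this]
    exact hM.map Complex.ofRealHom
  -- conjugate transposes
  have hMstar : Mcᴴ = Mc := by
    ext i j
    simp only [hMcdef, Matrix.conjTranspose_apply, Matrix.map_apply, Complex.star_def,
      Complex.conj_ofReal]
    rw [hMsymm.apply]
  have hAstar : Acᴴ = Ac := by
    ext i j
    simp only [hAcdef, Matrix.conjTranspose_apply, Matrix.map_apply, Complex.star_def,
      Complex.conj_ofReal]
    rw [hAsymm.apply]
  have hzstar : star z = -z := by
    rw [hzdef, Complex.star_def, map_div₀, _root_.map_mul, Complex.conj_ofReal,
      Complex.conj_ofReal, Complex.conj_I, neg_mul, div_neg]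
  -- conjugate transpose of X
  have hXstar : Xᴴ = Ac * Mc⁻¹ := by
    rw [hXdef, Matrix.conjTranspose_mul, hAstar, Matrix.conjTranspose_nonsing_inv, hMstar]
  -- conjugate transpose of B
  have hBstar : Bᴴ = Mc * NormedSpace.exp ((-z) • X) * Mc⁻¹ := by
    rw [hBdef, ← Matrix.exp_conjTranspose, Matrix.conjTranspose_smul, hzstar, hXstar]
    have h1 : (-z) • (Ac * Mc⁻¹) = Mc * ((-z) • X) * Mc⁻¹ := by
      rw [hXdef, mul_smul_comm, smul_mul_assoc, ← Matrix.mul_assoc Mc,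
        Matrix.mul_nonsing_inv _ ((Matrix.isUnit_iff_isUnit_det _).mp hMc), Matrix.one_mul]
    rw [h1, Matrix.exp_conj _ _ hMc]
  -- key identity
  have hinv : Mc⁻¹ * Mc = 1 := Matrix.nonsing_inv_mul _ ((Matrix.isUnit_iff_isUnit_det _).mp hMc)
  have hcomm : Commute ((-z) • X) (z • X) := ((Commute.refl X).smul_left (-z)).smul_right z
  have hexp : NormedSpace.exp ((-z) • X) * B = 1 := by
    rw [hBdef, ← Matrix.exp_add_of_commute _ _ hcomm, neg_smul, neg_add_cancel,
      NormedSpace.exp_zero]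
  have key : Bᴴ * (Mc * B) = Mc := by
    rw [hBstar]
    calc Mc * NormedSpace.exp ((-z) • X) * Mc⁻¹ * (Mc * B)
        = Mc * NormedSpace.exp ((-z) • X) * (Mc⁻¹ * Mc) * B := by
          simp only [Matrix.mul_assoc]
      _ = Mc * (NormedSpace.exp ((-z) • X) * B) := by rw [hinv, Matrix.mul_one, Matrix.mul_assoc]
      _ = Mc := by rw [hexp, Matrix.mul_one]
  rw [hstep]
  rw [Matrix.star_mulVec, Matrix.mulVec_mulVec, Matrix.dotProduct_mulVec,
    Matrix.vecMul_vecMul, ← Matrix.mul_assoc, Matrix.mul_assoc Bᴴ, key,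
    ← Matrix.dotProduct_mulVec]
end

section
/- Conservation of total energy (matrix form). Let M and A be n×n real symmetric matrices, viewed as complex matrices with real entries, with M invertible, let k and ε be real numbers with ε ≠ 0, and let c_n ∈ ℂⁿ. If c_{n+1} = exp((k/(iε)) M⁻¹ A) c_n, then c_{n+1}ᴴ A c_{n+1} = c_nᴴ A c_n. -/
open Matrix

lemma energy_aux {n : ℕ} (Mc Ac : Matrix (Fin n) (Fin n) ℂ)
    (hMc : IsUnit Mc) (hMh : Mcᴴ = Mc) (hAh : Acᴴ = Ac) (α : ℂ) (hα : star α = -α) :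
    (NormedSpace.exp (α • (Mc⁻¹ * Ac)))ᴴ * (Ac * NormedSpace.exp (α • (Mc⁻¹ * Ac))) = Ac := by
  set B : Matrix (Fin n) (Fin n) ℂ := Mc⁻¹ * Ac with hB
  set X : Matrix (Fin n) (Fin n) ℂ := α • B with hX
  have hXH : Xᴴ = Mc * (-X) * Mc⁻¹ := by
    have h1 : Xᴴ = (-α) • (Ac * Mc⁻¹) := by
      rw [hX, conjTranspose_smul, hα, hB, conjTranspose_mul, hAh, conjTranspose_nonsing_inv, hMh]
    have h2 : Mc * (-X) * Mc⁻¹ = (-α) • (Mc * B * Mc⁻¹) := by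
      rw [hX, ← neg_smul]; simp [Matrix.mul_smul, Matrix.smul_mul]
    rw [h1, h2, hB, ← Matrix.mul_assoc, Matrix.mul_nonsing_inv _ ((Matrix.isUnit_iff_isUnit_det Mc).mp hMc),
      Matrix.one_mul]
  have hexpH : (NormedSpace.exp X)ᴴ = Mc * NormedSpace.exp (-X) * Mc⁻¹ := by
    rw [← Matrix.exp_conjTranspose, hXH, Matrix.exp_conj Mc (-X) hMc]
  have hcomm : Commute (NormedSpace.exp (-X)) B :=
    Commute.exp_left (by rw [hX]; exact ((Commute.refl B).smul_left α).neg_left)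
  have hunit : NormedSpace.exp (-X) * NormedSpace.exp X = 1 := by
    rw [← Matrix.exp_add_of_commute _ _ ((Commute.refl X).neg_left), neg_add_cancel,
      NormedSpace.exp_zero]
  calc (NormedSpace.exp X)ᴴ * (Ac * NormedSpace.exp X)
      = Mc * (NormedSpace.exp (-X) * (Mc⁻¹ * Ac)) * NormedSpace.exp X := by
        rw [hexpH]; noncomm_ring
    _ = Mc * (B * (NormedSpace.exp (-X) * NormedSpace.exp X)) := by
        rw [← hB, hcomm.eq]; noncomm_ring
    _ = Ac := by
        rw [hunit, Matrix.mul_one, hB, ← Matrix.mul_assoc,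
          Matrix.mul_nonsing_inv _ ((Matrix.isUnit_iff_isUnit_det Mc).mp hMc), Matrix.one_mul]

/-- **Conservation of total energy (matrix form).** Let `M` and `A` be `n × n` real
symmetric matrices, viewed as complex matrices with real entries, with `M` invertible, let
`k, ε` be real with `ε ≠ 0`, and let `cₙ ∈ ℂⁿ`. If `cₙ₊₁ = exp ((k/(iε)) M⁻¹ A) cₙ`, then
`cₙ₊₁ᴴ A cₙ₊₁ = cₙᴴ A cₙ`. -/
theorem energy_conservation_matrix {n : ℕ} (M A : Matrix (Fin n) (Fin n) ℝ)
    (hMsymm : M.IsSymm) (hAsymm : A.IsSymm) (hM : IsUnit M) (k ε : ℝ) (hε : ε ≠ 0)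
    (c c' : Fin n → ℂ)
    (hstep : c' = (NormedSpace.exp (((k : ℂ) / (Complex.I * (ε : ℂ))) •
        ((M.map (Complex.ofReal))⁻¹ * A.map (Complex.ofReal)))) *ᵥ c) :
    star c' ⬝ᵥ (A.map (Complex.ofReal)) *ᵥ c' = star c ⬝ᵥ (A.map (Complex.ofReal)) *ᵥ c := by
  set Mc := M.map (Complex.ofReal) with hMcdef
  set Ac := A.map (Complex.ofReal) with hAcdef
  set α : ℂ := (k : ℂ) / (Complex.I * (ε : ℂ)) with hαdef
  set G := NormedSpace.exp (α • (Mc⁻¹ * Ac)) with hG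
  have hMc : IsUnit Mc := by
    have := hM.map (RingHom.mapMatrix (algebraMap ℝ ℂ) :
      Matrix (Fin n) (Fin n) ℝ →+* Matrix (Fin n) (Fin n) ℂ)
    simpa [RingHom.mapMatrix_apply, Matrix.map, hMcdef] using this
  have hmapH : ∀ (B : Matrix (Fin n) (Fin n) ℝ), B.IsSymm → (B.map Complex.ofReal)ᴴ =
      B.map Complex.ofReal := by
    intro B hB
    ext i j
    simp [conjTranspose_apply, ← hB.apply i j]
  have key : Gᴴ * (Ac * G) = Ac := by
    apply energy_aux Mc Ac hMc (hmapH M hMsymm) (hmapH A hAsymm)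
    show starRingEnd ℂ α = -α
    rw [hαdef, map_div₀, _root_.map_mul, Complex.conj_I, Complex.conj_ofReal, Complex.conj_ofReal,
      neg_mul, div_neg]
  rw [hstep, star_mulVec, mulVec_mulVec, dotProduct_mulVec, vecMul_vecMul, key, ← dotProduct_mulVec]
end

section
/- Continuous-in-time conservation of total mass. Let M and A be n×n real symmetric matrices, viewed as complex matrices with real entries, with M invertible, let ε be a nonzero real number, and let c : ℝ → ℂⁿ be differentiable with c'(t) = (1/(iε)) M⁻¹ A c(t) for all t. Then the function t ↦ c(t)ᴴ M c(t) is constant. -/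
open Matrix

lemma hasDerivAt_quadForm {n : ℕ} (Mc : Matrix (Fin n) (Fin n) ℂ) (c : ℝ → Fin n → ℂ)
    (v : Fin n → ℂ) (t : ℝ) (hc : HasDerivAt c v t) :
    HasDerivAt (fun t => star (c t) ⬝ᵥ Mc *ᵥ c t)
      (star v ⬝ᵥ Mc *ᵥ c t + star (c t) ⬝ᵥ Mc *ᵥ v) t := by
  have hci : ∀ i, HasDerivAt (fun t => c t i) (v i) t := hasDerivAt_pi.mp hc
  have hMv : ∀ i, HasDerivAt (fun t => (Mc *ᵥ c t) i) ((Mc *ᵥ v) i) t := by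
    intro i
    simpa [Matrix.mulVec, dotProduct] using
      HasDerivAt.fun_sum (fun j _ => ((hci j).const_mul (Mc i j)))
  have h : HasDerivAt (fun t => ∑ i, star (c t i) * (Mc *ᵥ c t) i)
      (∑ i, (star (v i) * (Mc *ᵥ c t) i + star (c t i) * (Mc *ᵥ v) i)) t :=
    HasDerivAt.fun_sum fun i _ => ((hci i).star.mul (hMv i))
  simpa [dotProduct, Finset.sum_add_distrib] using h

/-- **Continuous-in-time conservation of total mass.** Let `M, A` be `n × n` real
symmetric matrices (viewed as complex), `M` invertible, `ε ≠ 0`, and let `c : ℝ → ℂⁿ` be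
differentiable with `c'(t) = (1/(iε)) M⁻¹ A c(t)` for all `t`. Then `t ↦ c(t)ᴴ M c(t)` is
constant. -/
theorem mass_conservation_continuous {n : ℕ} (M A : Matrix (Fin n) (Fin n) ℝ)
    (hMsymm : M.IsSymm) (hAsymm : A.IsSymm) (hM : IsUnit M) (ε : ℝ) (hε : ε ≠ 0)
    (c : ℝ → Fin n → ℂ)
    (hc : ∀ t : ℝ, HasDerivAt c (((1 : ℂ) / (Complex.I * (ε : ℂ))) •
        (((M.map (Complex.ofReal))⁻¹ * A.map (Complex.ofReal)) *ᵥ c t)) t) :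
    ∀ s t : ℝ,
      star (c s) ⬝ᵥ (M.map (Complex.ofReal)) *ᵥ c s =
        star (c t) ⬝ᵥ (M.map (Complex.ofReal)) *ᵥ c t := by
  set Mc := M.map (Complex.ofReal) with hMc
  set Ac := A.map (Complex.ofReal) with hAc
  set k : ℂ := (1 : ℂ) / (Complex.I * (ε : ℂ)) with hk
  -- hermitian facts
  have hMcH : Mcᴴ = Mc := by
    ext i j
    simp [hMc, Matrix.conjTranspose_apply, ← hMsymm.apply i j]
  have hAcH : Acᴴ = Ac := by
    ext i j
    simp [hAc, Matrix.conjTranspose_apply, ← hAsymm.apply i j]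
  have hdetM : IsUnit Mc.det := by
    have h := (Matrix.isUnit_iff_isUnit_det M).mp hM
    have hd : Mc.det = Complex.ofReal M.det := by
      rw [hMc]; exact (RingHom.map_det Complex.ofRealHom M).symm
    rw [hd]
    exact h.map Complex.ofRealHom
  have hzero : ∀ t : ℝ,
      star (k • ((Mc⁻¹ * Ac) *ᵥ c t)) ⬝ᵥ Mc *ᵥ c t
        + star (c t) ⬝ᵥ Mc *ᵥ (k • ((Mc⁻¹ * Ac) *ᵥ c t)) = 0 := by
    intro t
    have h1 : star (k • ((Mc⁻¹ * Ac) *ᵥ c t)) ⬝ᵥ Mc *ᵥ c t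
        = star k * (star (c t) ⬝ᵥ Ac *ᵥ c t) := by
      rw [star_smul, smul_dotProduct, star_mulVec, smul_eq_mul]
      congr 1
      rw [dotProduct_mulVec, vecMul_vecMul, conjTranspose_mul, hAcH,
        conjTranspose_nonsing_inv, hMcH, Matrix.mul_assoc,
        Matrix.nonsing_inv_mul Mc hdetM, Matrix.mul_one, ← dotProduct_mulVec]
    have h2 : star (c t) ⬝ᵥ Mc *ᵥ (k • ((Mc⁻¹ * Ac) *ᵥ c t))
        = k * (star (c t) ⬝ᵥ Ac *ᵥ c t) := by
      rw [mulVec_smul, dotProduct_smul, smul_eq_mul]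
      congr 1
      rw [← mulVec_mulVec, mulVec_mulVec, Matrix.mul_nonsing_inv Mc hdetM, one_mulVec]
    have hks : star k = -k := by
      rw [hk]
      simp [div_eq_mul_inv, mul_comm]
    rw [h1, h2, hks]
    ring
  have hderiv : ∀ t : ℝ, HasDerivAt (fun t => star (c t) ⬝ᵥ Mc *ᵥ c t) 0 t := by
    intro t
    have := hasDerivAt_quadForm Mc c _ t (hc t)
    rwa [hzero t] at this
  intro s t
  have hdiff : Differentiable ℝ (fun t => star (c t) ⬝ᵥ Mc *ᵥ c t) :=
    fun x => (hderiv x).differentiableAt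
  have := is_const_of_deriv_eq_zero hdiff (fun x => (hderiv x).deriv) s t
  exact this
end

section
/- Conservation of total mass (function form). Let (Ω, μ) be a measure space, let φ_1, …, φ_n be real-valued functions in L²(Ω, μ), let M be the Gram matrix M_{pq} = ∫ φ_p φ_q dμ, assumed invertible, and let A be an n×n real symmetric matrix. Let k and ε be real numbers with ε ≠ 0, let c_n ∈ ℂⁿ, set c_{n+1} = exp((k/(iε)) M⁻¹ A) c_n, and define the wavefunctions ψ^n = Σ_p (c_n)_p φ_p and ψ^{n+1} = Σ_p (c_{n+1})_p φ_p. Then ∫ |ψ^{n+1}|² dμ = ∫ |ψ^n|² dμ. -/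
open Matrix MeasureTheory

namespace MassConsAux

/-- Key matrix identity: if `Mᴴ = M` is invertible, `Aᴴ = A`, and `star α = -α`, then
`E := exp (α • (M⁻¹A))` satisfies `Eᴴ M E = M`. -/
lemma key_matrix {n : ℕ} (Mc Ac : Matrix (Fin n) (Fin n) ℂ) (hMc : Mcᴴ = Mc) (hAc : Acᴴ = Ac)
    (hMu : IsUnit Mc) (α : ℂ) (hα : star α = -α) :
    (NormedSpace.exp (α • (Mc⁻¹ * Ac)))ᴴ * Mc * NormedSpace.exp (α • (Mc⁻¹ * Ac)) = Mc := by
  set B := α • (Mc⁻¹ * Ac) with hB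
  have hdet : IsUnit Mc.det := (Matrix.isUnit_iff_isUnit_det Mc).mp hMu
  have hMMinv : Mc * Mc⁻¹ = 1 := Matrix.mul_nonsing_inv Mc hdet
  have hMinvM : Mc⁻¹ * Mc = 1 := Matrix.nonsing_inv_mul Mc hdet
  have hBH : Bᴴ = Mc * (-B) * Mc⁻¹ := by
    rw [hB, Matrix.conjTranspose_smul, Matrix.conjTranspose_mul,
      Matrix.conjTranspose_nonsing_inv, hMc, hAc, hα]
    rw [← neg_smul, Matrix.mul_smul, Matrix.smul_mul]
    congr 1
    rw [← Matrix.mul_assoc, hMMinv, Matrix.one_mul]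
  have hexpH : (NormedSpace.exp B)ᴴ = Mc * NormedSpace.exp (-B) * Mc⁻¹ := by
    rw [← Matrix.exp_conjTranspose, hBH, Matrix.exp_conj Mc (-B) hMu]
  rw [hexpH]
  have hc : Commute (-B) B := (Commute.refl B).neg_left
  calc Mc * NormedSpace.exp (-B) * Mc⁻¹ * Mc * NormedSpace.exp B
      = Mc * NormedSpace.exp (-B) * (Mc⁻¹ * Mc) * NormedSpace.exp B := by
        rw [Matrix.mul_assoc (Mc * NormedSpace.exp (-B))]
    _ = Mc * (NormedSpace.exp (-B) * NormedSpace.exp B) := by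
        rw [hMinvM, Matrix.mul_one, Matrix.mul_assoc]
    _ = Mc := by
        rw [← Matrix.exp_add_of_commute _ _ hc, neg_add_cancel, NormedSpace.exp_zero,
          Matrix.mul_one]

/-- `∫ |ψ|² = Re (c* M c)` where `M` is the Gram matrix. -/
lemma integral_sq {Ω : Type*} [MeasurableSpace Ω] (μ : Measure Ω)
    {n : ℕ} (φ : Fin n → Ω → ℝ) (hφ : ∀ p, MemLp (φ p) 2 μ)
    (M : Matrix (Fin n) (Fin n) ℝ)
    (hM : ∀ p q : Fin n, M p q = ∫ x, φ p x * φ q x ∂μ)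
    (c : Fin n → ℂ) (ψ : Ω → ℂ) (hψ : ∀ x, ψ x = ∑ p, c p * (φ p x : ℂ)) :
    ∫ x, ‖ψ x‖ ^ 2 ∂μ
      = (star c ⬝ᵥ ((M.map (Complex.ofReal)) *ᵥ c)).re := by
  have hint : ∀ p q : Fin n, Integrable (fun x => φ p x * φ q x) μ := by
    intro p q
    have h : MemLp (φ p • φ q) 1 μ := by
      exact (hφ q).smul (hφ p)
    exact memLp_one_iff_integrable.mp h
  have hpt : ∀ x, ‖ψ x‖ ^ 2
      = ∑ p, ∑ q, ((starRingEnd ℂ) (c p) * c q).re * (φ p x * φ q x) := by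
    intro x
    have h1 : (‖ψ x‖ : ℝ) ^ 2 = ((starRingEnd ℂ) (ψ x) * ψ x).re := by
      rw [← Complex.normSq_eq_norm_sq, ← Complex.normSq_eq_conj_mul_self]
      simp
    rw [h1, hψ]
    rw [map_sum, Finset.sum_mul_sum]
    rw [Complex.re_sum]
    refine Finset.sum_congr rfl fun p _ => ?_
    rw [Complex.re_sum]
    refine Finset.sum_congr rfl fun q _ => ?_
    have : (starRingEnd ℂ) (c p * (φ p x : ℂ)) * (c q * (φ q x : ℂ))
        = ((starRingEnd ℂ) (c p) * c q) * ((φ p x * φ q x : ℝ) : ℂ) := by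
      push_cast
      rw [_root_.map_mul, Complex.conj_ofReal]
      ring
    rw [this]
    simp [Complex.mul_re]
  have hI : ∫ x, ‖ψ x‖ ^ 2 ∂μ
      = ∑ p, ∑ q, ((starRingEnd ℂ) (c p) * c q).re * M p q := by
    simp_rw [hpt]
    rw [integral_finset_sum _ (fun p _ => ?_)]
    · refine Finset.sum_congr rfl fun p _ => ?_
      rw [integral_finset_sum _ (fun q _ => ((hint p q).const_mul _))]
      refine Finset.sum_congr rfl fun q _ => ?_
      rw [MeasureTheory.integral_const_mul, hM]
    · exact integrable_finset_sum _ fun q _ => (hint p q).const_mul _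
  rw [hI]
  rw [dotProduct, Complex.re_sum]
  refine Finset.sum_congr rfl fun p _ => ?_
  rw [Matrix.mulVec, dotProduct, Finset.mul_sum, Complex.re_sum]
  refine Finset.sum_congr rfl fun q _ => ?_
  simp only [Pi.star_apply, Matrix.map_apply]
  have : star (c p) * ((M p q : ℂ) * c q) = ((starRingEnd ℂ) (c p) * c q) * ((M p q : ℝ) : ℂ) := by
    rw [Complex.star_def]; ring
  rw [this]
  simp [Complex.mul_re]

end MassConsAux

/-- **Conservation of total mass (function form).** Let `(Ω, μ)` be a measure
space, `φ₁, …, φₙ` real-valued in `L²(Ω, μ)`, `M` the (invertible) Gram matrix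
`M p q = ∫ φ_p φ_q dμ`, `A` an `n × n` real symmetric matrix, `k, ε` real with `ε ≠ 0`,
`cₙ ∈ ℂⁿ`, and `cₙ₊₁ = exp ((k/(iε)) M⁻¹ A) cₙ`. With `ψⁿ = Σ (cₙ)_p φ_p` and
`ψⁿ⁺¹ = Σ (cₙ₊₁)_p φ_p`, one has `∫ |ψⁿ⁺¹|² dμ = ∫ |ψⁿ|² dμ`. -/
theorem mass_conservation_function_form {Ω : Type*} [MeasurableSpace Ω] (μ : Measure Ω)
    {n : ℕ} (φ : Fin n → Ω → ℝ) (hφ : ∀ p, MemLp (φ p) 2 μ)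
    (M : Matrix (Fin n) (Fin n) ℝ)
    (hM : ∀ p q : Fin n, M p q = ∫ x, φ p x * φ q x ∂μ)
    (hMinv : IsUnit M)
    (A : Matrix (Fin n) (Fin n) ℝ) (hAsymm : A.IsSymm)
    (k ε : ℝ) (hε : ε ≠ 0) (c c' : Fin n → ℂ)
    (hstep : c' = (NormedSpace.exp (((k : ℂ) / (Complex.I * (ε : ℂ))) •
        ((M.map (Complex.ofReal))⁻¹ * A.map (Complex.ofReal)))) *ᵥ c)
    (ψ ψ' : Ω → ℂ)
    (hψ : ∀ x, ψ x = ∑ p, c p * (φ p x : ℂ))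
    (hψ' : ∀ x, ψ' x = ∑ p, c' p * (φ p x : ℂ)) :
    ∫ x, ‖ψ' x‖ ^ 2 ∂μ = ∫ x, ‖ψ x‖ ^ 2 ∂μ := by
  set Mc : Matrix (Fin n) (Fin n) ℂ := M.map Complex.ofReal with hMcdef
  set Ac : Matrix (Fin n) (Fin n) ℂ := A.map Complex.ofReal with hAcdef
  set α : ℂ := (k : ℂ) / (Complex.I * (ε : ℂ)) with hαdef
  -- hermitian-ness of Mc and Ac
  have hMsymm : ∀ p q, M p q = M q p := fun p q => by
    rw [hM, hM]; exact integral_congr_ae (Filter.Eventually.of_forall fun x => mul_comm _ _)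
  have hMcH : Mcᴴ = Mc := by
    ext p q
    simp [hMcdef, Matrix.conjTranspose_apply, Matrix.map_apply, Complex.conj_ofReal, hMsymm p q]
  have hAcH : Acᴴ = Ac := by
    ext p q
    have := congrFun (congrFun hAsymm p) q
    simp only [Matrix.transpose_apply] at this
    simp [hAcdef, Matrix.conjTranspose_apply, Matrix.map_apply, Complex.conj_ofReal, this]
  have hMcU : IsUnit Mc := by
    have : Mc = (Complex.ofRealHom.mapMatrix) M := rfl
    rw [this]
    exact hMinv.map _
  have hα : star α = -α := by
    rw [hαdef, Complex.star_def, map_div₀, _root_.map_mul, Complex.conj_ofReal, Complex.conj_ofReal,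
      Complex.conj_I, neg_mul, div_neg]
  have hkey := MassConsAux.key_matrix Mc Ac hMcH hAcH hMcU α hα
  set E := NormedSpace.exp (α • (Mc⁻¹ * Ac)) with hEdef
  have hquad : star c' ⬝ᵥ (Mc *ᵥ c') = star c ⬝ᵥ (Mc *ᵥ c) := by
    rw [hstep]
    rw [Matrix.star_mulVec, Matrix.mulVec_mulVec]
    rw [Matrix.dotProduct_mulVec, Matrix.vecMul_vecMul, ← Matrix.mul_assoc, hkey,
      ← Matrix.dotProduct_mulVec]
  rw [MassConsAux.integral_sq μ φ hφ M hM c' ψ' hψ',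
    MassConsAux.integral_sq μ φ hφ M hM c ψ hψ, hquad]
end
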